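/- For every graphon W, m_{K_{1,2}}(W) = (2/3)·m_{K_3}(W) + 1/3 ≤ (2/3)·sqrt(m_D(W)) + 1/3, where D is the diamond graph K_{1,1,2}. -/

import Mathlib

open MeasureTheory

/-- Homomorphism density of a single edge `K₂`. -/
noncomputable def tK2 (U : unitInterval → unitInterval → ℝ) : ℝ :=
  ∫ x : Fin 2 → unitInterval, U (x 0) (x 1)

/-- Homomorphism density of the cherry/path `K_{1,2}`. -/
noncomputable def tP3 (U : unitInterval → unitInterval → ℝ) : ℝ :=
  ∫ x : Fin 3 → unitInterval, U (x 0) (x 1) * U (x 1) (x 2)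

/-- Homomorphism density of the triangle `K₃`. -/
noncomputable def tK3 (U : unitInterval → unitInterval → ℝ) : ℝ :=
  ∫ x : Fin 3 → unitInterval, U (x 0) (x 1) * U (x 1) (x 2) * U (x 2) (x 0)

/-- Homomorphism density of the 4-cycle `C₄`. -/
noncomputable def tC4 (U : unitInterval → unitInterval → ℝ) : ℝ :=
  ∫ x : Fin 4 → unitInterval, U (x 0) (x 1) * U (x 1) (x 2) * U (x 2) (x 3) * U (x 3) (x 0)

/-- Homomorphism density of the triangle with a pendant edge `K₃⁺`. -/
noncomputable def tK3p (U : unitInterval → unitInterval → ℝ) : ℝ :=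
  ∫ x : Fin 4 → unitInterval, U (x 0) (x 1) * U (x 1) (x 2) * U (x 2) (x 0) * U (x 2) (x 3)

/-- Homomorphism density of the diamond `D = K_{1,1,2}`. -/
noncomputable def tD (U : unitInterval → unitInterval → ℝ) : ℝ :=
  ∫ x : Fin 4 → unitInterval,
    U (x 0) (x 1) * U (x 0) (x 2) * U (x 0) (x 3) * U (x 1) (x 2) * U (x 1) (x 3)

/-- Homomorphism density of the octahedron `K_{2,2,2}` (parts `{0,1},{2,3},{4,5}`). -/
noncomputable def tK222 (U : unitInterval → unitInterval → ℝ) : ℝ :=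
  ∫ x : Fin 6 → unitInterval,
    U (x 0) (x 2) * U (x 0) (x 3) * U (x 0) (x 4) * U (x 0) (x 5) *
    U (x 1) (x 2) * U (x 1) (x 3) * U (x 1) (x 4) * U (x 1) (x 5) *
    U (x 2) (x 4) * U (x 2) (x 5) * U (x 3) (x 4) * U (x 3) (x 5)

/-- `W` is a graphon: measurable, symmetric, with values in `[0,1]`. -/
def IsGraphon (W : unitInterval → unitInterval → ℝ) : Prop :=
  Measurable (fun p : unitInterval × unitInterval => W p.1 p.2) ∧
    (∀ x y, W x y = W y x) ∧ (∀ x y, 0 ≤ W x y) ∧ (∀ x y, W x y ≤ 1)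

/-- The complementary graphon `1 - W`. -/
def compl' (W : unitInterval → unitInterval → ℝ) : unitInterval → unitInterval → ℝ :=
  fun x y => 1 - W x y

namespace GoodmanAux

local notation "𝕀" => unitInterval

lemma intg {α : Type*} [MeasureSpace α] [IsProbabilityMeasure (volume : Measure α)]
    {f : α → ℝ} (hm : Measurable f) (hb : ∀ x, |f x| ≤ 1) : Integrable f :=
  (integrable_const 1).mono' hm.aestronglyMeasurable
    (ae_of_all _ (fun x => by simpa [Real.norm_eq_abs] using hb x))

lemma abs_int_le {α : Type*} [MeasureSpace α] [IsProbabilityMeasure (volume : Measure α)]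
    {f : α → ℝ} (hb : ∀ x, |f x| ≤ 1) : |∫ x, f x| ≤ 1 := by
  have := norm_integral_le_of_norm_le_const (μ := (volume : Measure α)) (f := f) (C := 1)
    (ae_of_all _ (fun x => by simpa [Real.norm_eq_abs] using hb x))
  simpa [Real.norm_eq_abs, measure_univ] using this

lemma mul_abs_le_one {a b : ℝ} (ha : |a| ≤ 1) (hb : |b| ≤ 1) : |a * b| ≤ 1 := by
  rw [abs_mul]; nlinarith [abs_nonneg a, abs_nonneg b]

lemma peel {n : ℕ} (f : (Fin (n+1) → 𝕀) → ℝ) (hm : Measurable f)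
    (hb : ∀ x, |f x| ≤ 1) :
    ∫ x, f x = ∫ z : 𝕀, ∫ y : Fin n → 𝕀, f (Fin.cons z y) := by
  have hcons : Measurable fun p : 𝕀 × (Fin n → 𝕀) =>
      (Fin.cons p.1 p.2 : Fin (n+1) → 𝕀) := by
    refine measurable_pi_iff.2 ?_
    intro i
    refine Fin.cases ?_ ?_ i
    · simpa using measurable_fst
    · intro j; simp only [Fin.cons_succ]; exact (measurable_pi_apply j).comp measurable_snd
  have hint : Integrable (fun p : 𝕀 × (Fin n → 𝕀) =>
      f (Fin.cons p.1 p.2)) := intg (hm.comp hcons) (fun p => hb _)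
  rw [volume_pi, ← ((measurePreserving_piFinSuccAbove
    (fun _ : Fin (n+1) => (volume : Measure 𝕀)) 0).symm).integral_comp']
  simp only [MeasurableEquiv.piFinSuccAbove_symm_apply, Fin.insertNthEquiv, Equiv.coe_fn_mk,
    Fin.insertNth_zero, Fin.zero_succAbove, cast_eq]
  have hc : ∀ p : 𝕀 × (Fin n → 𝕀),
      (Fin.cons p.1 (fun j => _root_.cast (by simp) (p.2 j)) : Fin (n+1) → 𝕀)
        = Fin.cons p.1 p.2 := by
    intro p; congr
  calc ∫ p : 𝕀 × (Fin n → 𝕀),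
        f (Fin.cons p.1 fun j => _root_.cast (by simp) (p.2 j))
          ∂(volume.prod (Measure.pi fun _ => volume))
      = ∫ p : 𝕀 × (Fin n → 𝕀), f (Fin.cons p.1 p.2)
          ∂(volume.prod volume) := by
        rw [← volume_pi]
        exact integral_congr_ae (ae_of_all _ fun p => congrArg f (hc p))
    _ = ∫ z : 𝕀, ∫ y : Fin n → 𝕀, f (Fin.cons z y) := by
        exact integral_prod _ (by rw [← Measure.volume_eq_prod]; exact hint)

lemma peel0 (g : 𝕀 → ℝ) (hm : Measurable g) (hb : ∀ x, |g x| ≤ 1) :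
    ∫ y : Fin 1 → 𝕀, g (y 0) = ∫ w, g w := by
  rw [peel (fun y => g (y 0)) (hm.comp (measurable_pi_apply 0)) (fun x => hb _)]
  simp [measure_univ]

lemma peel1 (g : 𝕀 → 𝕀 → ℝ) (hm : Measurable fun p : 𝕀 × 𝕀 => g p.1 p.2)
    (hb : ∀ x y, |g x y| ≤ 1) :
    ∫ x : Fin 2 → 𝕀, g (x 0) (x 1) = ∫ z, ∫ w, g z w := by
  have hmx : Measurable fun x : Fin 2 → 𝕀 => g (x 0) (x 1) := by
    have hp : Measurable fun x : Fin 2 → 𝕀 => ((x 0, x 1) : 𝕀 × 𝕀) :=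
      (measurable_pi_apply 0).prodMk (measurable_pi_apply 1)
    exact hm.comp hp
  rw [peel (fun x => g (x 0) (x 1)) hmx (fun x => hb _ _)]
  exact integral_congr_ae (ae_of_all _ fun z =>
    peel0 (g z) (hm.comp measurable_prodMk_left) (hb z))

lemma peel2 (g : 𝕀 → 𝕀 → 𝕀 → ℝ) (hm : Measurable fun p : 𝕀 × 𝕀 × 𝕀 => g p.1 p.2.1 p.2.2)
    (hb : ∀ x y z, |g x y z| ≤ 1) :
    ∫ x : Fin 3 → 𝕀, g (x 0) (x 1) (x 2) = ∫ a, ∫ b, ∫ c, g a b c := by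
  have hmx : Measurable fun x : Fin 3 → 𝕀 => g (x 0) (x 1) (x 2) := by
    have hp : Measurable fun x : Fin 3 → 𝕀 => ((x 0, x 1, x 2) : 𝕀 × 𝕀 × 𝕀) :=
      (measurable_pi_apply 0).prodMk ((measurable_pi_apply 1).prodMk (measurable_pi_apply 2))
    exact hm.comp hp
  rw [peel (fun x => g (x 0) (x 1) (x 2)) hmx (fun x => hb _ _ _)]
  exact integral_congr_ae (ae_of_all _ fun a =>
    peel1 (g a) (hm.comp measurable_prodMk_left) (hb a))

lemma peel3 (g : 𝕀 → 𝕀 → 𝕀 → 𝕀 → ℝ)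
    (hm : Measurable fun p : 𝕀 × 𝕀 × 𝕀 × 𝕀 => g p.1 p.2.1 p.2.2.1 p.2.2.2)
    (hb : ∀ x y z w, |g x y z w| ≤ 1) :
    ∫ x : Fin 4 → 𝕀, g (x 0) (x 1) (x 2) (x 3) = ∫ a, ∫ b, ∫ c, ∫ d, g a b c d := by
  have hmx : Measurable fun x : Fin 4 → 𝕀 => g (x 0) (x 1) (x 2) (x 3) := by
    have hp : Measurable fun x : Fin 4 → 𝕀 => ((x 0, x 1, x 2, x 3) : 𝕀 × 𝕀 × 𝕀 × 𝕀) :=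
      (measurable_pi_apply 0).prodMk ((measurable_pi_apply 1).prodMk
        ((measurable_pi_apply 2).prodMk (measurable_pi_apply 3)))
    exact hm.comp hp
  rw [peel (fun x => g (x 0) (x 1) (x 2) (x 3)) hmx (fun x => hb _ _ _ _)]
  exact integral_congr_ae (ae_of_all _ fun a =>
    peel2 (g a) (hm.comp measurable_prodMk_left) (hb a))

lemma swap2 {g : 𝕀 → 𝕀 → ℝ} (hm : Measurable fun p : 𝕀 × 𝕀 => g p.1 p.2)
    (hb : ∀ y z, |g y z| ≤ 1) :
    ∫ y, ∫ z, g y z = ∫ z, ∫ y, g y z :=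
  integral_integral_swap (intg hm (fun p => hb p.1 p.2))

lemma prod2 {g : 𝕀 → 𝕀 → ℝ} (hm : Measurable fun p : 𝕀 × 𝕀 => g p.1 p.2)
    (hb : ∀ y z, |g y z| ≤ 1) :
    ∫ p : 𝕀 × 𝕀, g p.1 p.2 = ∫ y, ∫ z, g y z :=
  integral_prod _ (intg hm (fun p => hb p.1 p.2))

noncomputable def dg (U : 𝕀 → 𝕀 → ℝ) (y : 𝕀) : ℝ := ∫ z, U y z

noncomputable def kg (U : 𝕀 → 𝕀 → ℝ) (y z : 𝕀) : ℝ := ∫ x, U y x * U z x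

variable {U : 𝕀 → 𝕀 → ℝ}

lemma habs (hU : IsGraphon U) (x y : 𝕀) : |U x y| ≤ 1 :=
  abs_le.2 ⟨by linarith [hU.2.2.1 x y], hU.2.2.2 x y⟩

lemma compl_graphon (hU : IsGraphon U) : IsGraphon (compl' U) :=
  ⟨measurable_const.sub hU.1, fun x y => by simp only [compl', hU.2.1 x y],
    fun x y => by simp only [compl', sub_nonneg]; exact hU.2.2.2 x y,
    fun x y => by simp only [compl']; linarith [hU.2.2.1 x y]⟩

lemma measU2 (hU : IsGraphon U) {β : Type*} [MeasurableSpace β] {f g : β → 𝕀}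
    (hf : Measurable f) (hg : Measurable g) : Measurable fun x => U (f x) (g x) := by
  have hp : Measurable fun x => ((f x, g x) : 𝕀 × 𝕀) := hf.prodMk hg
  exact hU.1.comp hp

lemma Usec (hU : IsGraphon U) (y : 𝕀) : Measurable (U y) :=
  hU.1.comp measurable_prodMk_left

lemma dg_meas (hU : IsGraphon U) : Measurable (dg U) := by
  have h : StronglyMeasurable fun y : 𝕀 => ∫ z, U y z :=
    StronglyMeasurable.integral_prod_right (f := U) hU.1.stronglyMeasurable
  exact h.measurable

lemma dg_abs (hU : IsGraphon U) (y : 𝕀) : |dg U y| ≤ 1 :=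
  abs_int_le (fun z => habs hU y z)

lemma dg_nonneg (hU : IsGraphon U) (y : 𝕀) : 0 ≤ dg U y :=
  integral_nonneg fun z => hU.2.2.1 y z

lemma Uint (hU : IsGraphon U) (y : 𝕀) : Integrable (U y) :=
  intg (Usec hU y) (fun z => habs hU y z)

lemma dg_compl (hU : IsGraphon U) (y : 𝕀) : dg (compl' U) y = 1 - dg U y := by
  show ∫ z, (1 - U y z) = 1 - dg U y
  rw [integral_sub (integrable_const 1) (Uint hU y)]
  simp [measure_univ, dg]

lemma kg_meas (hU : IsGraphon U) : Measurable fun p : 𝕀 × 𝕀 => kg U p.1 p.2 := by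
  have h : Measurable fun q : (𝕀 × 𝕀) × 𝕀 => U q.1.1 q.2 * U q.1.2 q.2 :=
    (measU2 hU (measurable_fst.comp measurable_fst) measurable_snd).mul
      (measU2 hU (measurable_snd.comp measurable_fst) measurable_snd)
  have h2 : StronglyMeasurable fun p : 𝕀 × 𝕀 => ∫ x, U p.1 x * U p.2 x :=
    StronglyMeasurable.integral_prod_right' h.stronglyMeasurable
  exact h2.measurable

lemma kg_abs (hU : IsGraphon U) (y z : 𝕀) : |kg U y z| ≤ 1 :=
  abs_int_le (fun x => mul_abs_le_one (habs hU y x) (habs hU z x))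

lemma kg_nonneg (hU : IsGraphon U) (y z : 𝕀) : 0 ≤ kg U y z :=
  integral_nonneg fun x => mul_nonneg (hU.2.2.1 y x) (hU.2.2.1 z x)

lemma kg_comm (y z : 𝕀) : kg U y z = kg U z y :=
  integral_congr_ae (ae_of_all _ fun x => mul_comm _ _)

lemma kg_compl (hU : IsGraphon U) (y z : 𝕀) :
    kg (compl' U) y z = 1 - dg U y - dg U z + kg U y z := by
  show ∫ x, (1 - U y x) * (1 - U z x) = _
  have h3 : Integrable (fun x => U y x * U z x) :=
    intg ((Usec hU y).mul (Usec hU z)) (fun x => mul_abs_le_one (habs hU y x) (habs hU z x))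
  have ha : Integrable (fun x => 1 - U y x - U z x) := by
    exact ((integrable_const 1).sub (Uint hU y)).sub (Uint hU z)
  have hb : Integrable (fun x => 1 - U y x) := by
    exact (integrable_const 1).sub (Uint hU y)
  have he : (fun x => (1 - U y x) * (1 - U z x))
      = fun x => (1 - U y x - U z x) + U y x * U z x := funext fun x => by ring
  rw [he, integral_add ha h3]
  have h4 : ∫ x, (1 - U y x - U z x) = (∫ x, (1 - U y x)) - ∫ x, U z x :=
    integral_sub hb (Uint hU z)
  rw [h4, integral_sub (integrable_const 1) (Uint hU y)]
  simp only [integral_const, measure_univ, ENNReal.toReal_one, probReal_univ, smul_eq_mul, mul_one, one_smul]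
  show 1 - dg U y - dg U z + kg U y z = _
  ring

lemma tK2_eq (hU : IsGraphon U) : tK2 U = ∫ y, dg U y := by
  rw [tK2, peel1 U hU.1 (habs hU)]
  rfl

lemma tP3_eq (hU : IsGraphon U) : tP3 U = ∫ z, ∫ w, U z w * dg U w := by
  have hm3 : Measurable fun p : 𝕀 × 𝕀 × 𝕀 => U p.1 p.2.1 * U p.2.1 p.2.2 :=
    (measU2 hU measurable_fst (measurable_fst.comp measurable_snd)).mul
      (measU2 hU (measurable_fst.comp measurable_snd) (measurable_snd.comp measurable_snd))
  rw [tP3, peel2 (fun a b c => U a b * U b c) hm3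
    (fun a b c => mul_abs_le_one (habs hU a b) (habs hU b c))]
  exact integral_congr_ae (ae_of_all _ fun a => integral_congr_ae (ae_of_all _ fun b =>
    integral_const_mul _ _))

lemma tK3_eq (hU : IsGraphon U) : tK3 U = ∫ z, ∫ w, U z w * kg U z w := by
  have hm3 : Measurable fun p : 𝕀 × 𝕀 × 𝕀 => U p.1 p.2.1 * U p.2.1 p.2.2 * U p.2.2 p.1 :=
    ((measU2 hU measurable_fst (measurable_fst.comp measurable_snd)).mul
      (measU2 hU (measurable_fst.comp measurable_snd) (measurable_snd.comp measurable_snd))).mul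
      (measU2 hU (measurable_snd.comp measurable_snd) measurable_fst)
  rw [tK3, peel2 (fun a b c => U a b * U b c * U c a) hm3
    (fun a b c => mul_abs_le_one (mul_abs_le_one (habs hU a b) (habs hU b c)) (habs hU c a))]
  refine integral_congr_ae (ae_of_all _ fun a => integral_congr_ae (ae_of_all _ fun b => ?_))
  show ∫ c, U a b * U b c * U c a = U a b * kg U a b
  have he : (fun c => U a b * U b c * U c a) = fun c => U a b * (U b c * U c a) :=
    funext fun c => by ring
  rw [he, integral_const_mul]
  show U a b * ∫ c, U b c * U c a = U a b * kg U a b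
  congr 1
  refine integral_congr_ae (ae_of_all _ fun c => ?_)
  show U b c * U c a = U a c * U b c
  rw [hU.2.1 c a]; ring

lemma tD_eq (hU : IsGraphon U) : tD U = ∫ z, ∫ w, U z w * (kg U z w * kg U z w) := by
  have hm4 : Measurable fun p : 𝕀 × 𝕀 × 𝕀 × 𝕀 =>
      U p.1 p.2.1 * U p.1 p.2.2.1 * U p.1 p.2.2.2 * U p.2.1 p.2.2.1 * U p.2.1 p.2.2.2 :=
    ((((measU2 hU measurable_fst (measurable_fst.comp measurable_snd)).mul
      (measU2 hU measurable_fst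
        (measurable_fst.comp (measurable_snd.comp measurable_snd)))).mul
      (measU2 hU measurable_fst
        (measurable_snd.comp (measurable_snd.comp measurable_snd)))).mul
      (measU2 hU (measurable_fst.comp measurable_snd)
        (measurable_fst.comp (measurable_snd.comp measurable_snd)))).mul
      (measU2 hU (measurable_fst.comp measurable_snd)
        (measurable_snd.comp (measurable_snd.comp measurable_snd)))
  rw [tD, peel3 (fun a b c d => U a b * U a c * U a d * U b c * U b d) hm4
    (fun a b c d => mul_abs_le_one (mul_abs_le_one (mul_abs_le_one
      (mul_abs_le_one (habs hU a b) (habs hU a c)) (habs hU a d)) (habs hU b c)) (habs hU b d))]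
  refine integral_congr_ae (ae_of_all _ fun a => integral_congr_ae (ae_of_all _ fun b => ?_))
  show ∫ c, ∫ d, U a b * U a c * U a d * U b c * U b d = U a b * (kg U a b * kg U a b)
  have h1 : ∀ c, ∫ d, U a b * U a c * U a d * U b c * U b d
      = (U a b * kg U a b) * (U a c * U b c) := by
    intro c
    have he : (fun d => U a b * U a c * U a d * U b c * U b d)
        = fun d => (U a b * U a c * U b c) * (U a d * U b d) := funext fun d => by ring
    rw [he, integral_const_mul, show (∫ d, U a d * U b d) = kg U a b from rfl]
    ring
  calc ∫ c, ∫ d, U a b * U a c * U a d * U b c * U b d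
      = ∫ c, (U a b * kg U a b) * (U a c * U b c) := integral_congr_ae (ae_of_all _ h1)
    _ = (U a b * kg U a b) * kg U a b := by
        rw [integral_const_mul, show (∫ c, U a c * U b c) = kg U a b from rfl]
    _ = U a b * (kg U a b * kg U a b) := by ring

lemma cs {Ω : Type*} [MeasureSpace Ω] [IsProbabilityMeasure (volume : Measure Ω)]
    {F G : Ω → ℝ} (hFm : Measurable F) (hGm : Measurable G)
    (hF0 : ∀ x, 0 ≤ F x) (hF1 : ∀ x, |F x| ≤ 1) (hG1 : ∀ x, |G x| ≤ 1) :
    (∫ x, F x * G x) ^ 2 ≤ (∫ x, F x) * ∫ x, F x * (G x * G x) := by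
  have hInt1 : Integrable F := intg hFm hF1
  have hInt2 : Integrable (fun x => F x * G x) :=
    intg (hFm.mul hGm) (fun x => mul_abs_le_one (hF1 x) (hG1 x))
  have hInt3 : Integrable (fun x => F x * (G x * G x)) :=
    intg (hFm.mul (hGm.mul hGm))
      (fun x => mul_abs_le_one (hF1 x) (mul_abs_le_one (hG1 x) (hG1 x)))
  set A := ∫ x, F x * (G x * G x) with hA
  set B := ∫ x, F x * G x with hB
  set C := ∫ x, F x with hC
  have key : ∀ lam : ℝ, 0 ≤ A * (lam * lam) + (-2 * B) * lam + C := by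
    intro lam
    have expand : A * (lam * lam) + (-2 * B) * lam + C = ∫ x, F x * (lam * G x - 1) ^ 2 := by
      have he : (fun x => F x * (lam * G x - 1) ^ 2)
          = fun x => ((lam * lam) * (F x * (G x * G x)) - (2 * lam) * (F x * G x)) + F x :=
        funext fun x => by ring
      have hsub : Integrable (fun x =>
          (lam * lam) * (F x * (G x * G x)) - (2 * lam) * (F x * G x)) := by
        exact (hInt3.const_mul _).sub (hInt2.const_mul _)
      rw [he, integral_add hsub hInt1,
        integral_sub (hInt3.const_mul _) (hInt2.const_mul _),
        integral_const_mul, integral_const_mul]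
      ring
    rw [expand]
    exact integral_nonneg fun x => mul_nonneg (hF0 x) (sq_nonneg _)
  have hd := discrim_le_zero key
  rw [discrim] at hd
  nlinarith [hd]

variable (U) in
lemma tK2_prod (hU : IsGraphon U) : tK2 U = ∫ p : 𝕀 × 𝕀, U p.1 p.2 := by
  rw [tK2_eq hU, prod2 hU.1 (habs hU)]
  rfl

lemma tP3_prod (hU : IsGraphon U) : tP3 U = ∫ p : 𝕀 × 𝕀, U p.1 p.2 * dg U p.2 := by
  have hm : Measurable fun p : 𝕀 × 𝕀 => U p.1 p.2 * dg U p.2 :=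
    hU.1.mul ((dg_meas hU).comp measurable_snd)
  exact (tP3_eq hU).trans (prod2 hm (fun y z => mul_abs_le_one (habs hU y z) (dg_abs hU z))).symm

lemma tK3_prod (hU : IsGraphon U) : tK3 U = ∫ p : 𝕀 × 𝕀, U p.1 p.2 * kg U p.1 p.2 := by
  have hm : Measurable fun p : 𝕀 × 𝕀 => U p.1 p.2 * kg U p.1 p.2 := hU.1.mul (kg_meas hU)
  exact (tK3_eq hU).trans
    (prod2 hm (fun y z => mul_abs_le_one (habs hU y z) (kg_abs hU y z))).symm

lemma tD_prod (hU : IsGraphon U) :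
    tD U = ∫ p : 𝕀 × 𝕀, U p.1 p.2 * (kg U p.1 p.2 * kg U p.1 p.2) := by
  have hm : Measurable fun p : 𝕀 × 𝕀 => U p.1 p.2 * (kg U p.1 p.2 * kg U p.1 p.2) :=
    hU.1.mul ((kg_meas hU).mul (kg_meas hU))
  exact (tD_eq hU).trans (prod2 hm (fun y z =>
    mul_abs_le_one (habs hU y z) (mul_abs_le_one (kg_abs hU y z) (kg_abs hU y z)))).symm

lemma tP3_val (hU : IsGraphon U) : tP3 U = ∫ y, dg U y * dg U y := by
  have hm : Measurable fun p : 𝕀 × 𝕀 => U p.1 p.2 * dg U p.2 :=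
    hU.1.mul ((dg_meas hU).comp measurable_snd)
  rw [tP3_eq hU, swap2 hm (fun y z => mul_abs_le_one (habs hU y z) (dg_abs hU z))]
  refine integral_congr_ae (ae_of_all _ fun w => ?_)
  show ∫ z, U z w * dg U w = dg U w * dg U w
  rw [integral_mul_const]
  have hs : ∫ z, U z w = dg U w := by
    rw [show (fun z => U z w) = fun z => U w z from funext fun z => hU.2.1 z w]
    rfl
  rw [hs]

lemma int_dg_fst (hU : IsGraphon U) : ∫ p : 𝕀 × 𝕀, dg U p.1 = ∫ y, dg U y := by
  rw [prod2 ((dg_meas hU).comp measurable_fst) (fun y _ => dg_abs hU y)]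
  refine integral_congr_ae (ae_of_all _ fun y => ?_)
  show ∫ _z : 𝕀, dg U y = dg U y
  simp [measure_univ]

lemma int_dg_snd (hU : IsGraphon U) : ∫ p : 𝕀 × 𝕀, dg U p.2 = ∫ y, dg U y := by
  rw [prod2 ((dg_meas hU).comp measurable_snd) (fun _ z => dg_abs hU z)]
  show ∫ _y : 𝕀, ∫ z, dg U z = ∫ y, dg U y
  simp [measure_univ]

lemma int_U (hU : IsGraphon U) : ∫ p : 𝕀 × 𝕀, U p.1 p.2 = ∫ y, dg U y :=
  (tK2_prod U hU).symm.trans (tK2_eq hU)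

lemma int_U_dg_snd (hU : IsGraphon U) :
    ∫ p : 𝕀 × 𝕀, U p.1 p.2 * dg U p.2 = ∫ y, dg U y * dg U y :=
  (tP3_prod hU).symm.trans (tP3_val hU)

lemma int_U_dg_fst (hU : IsGraphon U) :
    ∫ p : 𝕀 × 𝕀, U p.1 p.2 * dg U p.1 = ∫ y, dg U y * dg U y := by
  have hm : Measurable fun p : 𝕀 × 𝕀 => U p.1 p.2 * dg U p.1 :=
    hU.1.mul ((dg_meas hU).comp measurable_fst)
  rw [prod2 hm (fun y z => mul_abs_le_one (habs hU y z) (dg_abs hU y))]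
  refine integral_congr_ae (ae_of_all _ fun y => ?_)
  show ∫ z, U y z * dg U y = dg U y * dg U y
  rw [integral_mul_const]
  rfl

lemma int_kg (hU : IsGraphon U) :
    ∫ p : 𝕀 × 𝕀, kg U p.1 p.2 = ∫ y, dg U y * dg U y := by
  rw [prod2 (kg_meas hU) (kg_abs hU)]
  have hy : ∀ y, ∫ z, kg U y z = ∫ x, U y x * dg U x := by
    intro y
    show ∫ z, ∫ x, U y x * U z x = _
    have hm' : Measurable fun p : 𝕀 × 𝕀 => U y p.2 * U p.1 p.2 :=
      (measU2 hU measurable_const measurable_snd).mul (measU2 hU measurable_fst measurable_snd)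
    rw [swap2 hm' (fun z x => mul_abs_le_one (habs hU y x) (habs hU z x))]
    refine integral_congr_ae (ae_of_all _ fun x => ?_)
    show ∫ z, U y x * U z x = U y x * dg U x
    rw [integral_const_mul]
    congr 1
    rw [show (fun z => U z x) = fun z => U x z from funext fun z => hU.2.1 z x]
    rfl
  exact (integral_congr_ae (ae_of_all _ hy)).trans ((tP3_eq hU).symm.trans (tP3_val hU))

lemma tK3_nonneg (hU : IsGraphon U) : 0 ≤ tK3 U :=
  integral_nonneg fun x =>
    mul_nonneg (mul_nonneg (hU.2.2.1 _ _) (hU.2.2.1 _ _)) (hU.2.2.1 _ _)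

lemma tD_nonneg (hU : IsGraphon U) : 0 ≤ tD U :=
  integral_nonneg fun x =>
    mul_nonneg (mul_nonneg (mul_nonneg (mul_nonneg (hU.2.2.1 _ _) (hU.2.2.1 _ _))
      (hU.2.2.1 _ _)) (hU.2.2.1 _ _)) (hU.2.2.1 _ _)

lemma goodman_main (W : 𝕀 → 𝕀 → ℝ) (hW : IsGraphon W) :
    tP3 W + tP3 (compl' W) = 2 / 3 * (tK3 W + tK3 (compl' W)) + 1 / 3 ∧
      tP3 W + tP3 (compl' W) ≤ 2 / 3 * Real.sqrt (tD W + tD (compl' W)) + 1 / 3 := by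
  have hV : IsGraphon (compl' W) := compl_graphon hW
  set e := ∫ y, dg W y with hedef
  set P := ∫ y, dg W y * dg W y with hPdef
  have hd : Integrable (dg W) := intg (dg_meas hW) (dg_abs hW)
  have hd2 : Integrable (fun y => dg W y * dg W y) :=
    intg ((dg_meas hW).mul (dg_meas hW)) (fun y => mul_abs_le_one (dg_abs hW y) (dg_abs hW y))
  -- edge density of the complement
  have f5 : tK2 (compl' W) = 1 - e := by
    rw [tK2_eq hV]
    calc ∫ y, dg (compl' W) y = ∫ y, (1 - dg W y) :=
          integral_congr_ae (ae_of_all _ fun y => by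
            show dg (compl' W) y = _
            rw [dg_compl hW y])
      _ = 1 - e := by rw [integral_sub (integrable_const 1) hd]; simp [measure_univ]; rfl
  -- cherry densities
  have f1 : tP3 W = P := tP3_val hW
  have f2 : tP3 (compl' W) = 1 - 2 * e + P := by
    rw [tP3_val hV]
    calc ∫ y, dg (compl' W) y * dg (compl' W) y
        = ∫ y, (1 - 2 * dg W y + dg W y * dg W y) :=
          integral_congr_ae (ae_of_all _ fun y => by
            show dg (compl' W) y * dg (compl' W) y = _
            rw [dg_compl hW y]; ring)
      _ = 1 - 2 * e + P := by
          have hsub : Integrable (fun y => 1 - 2 * dg W y) := by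
            exact (integrable_const 1).sub (hd.const_mul 2)
          rw [integral_add hsub hd2, integral_sub (integrable_const 1) (hd.const_mul 2),
            integral_const_mul]
          simp [measure_univ]; rfl
  -- triangle density sum (Goodman)
  have f3 : tK3 W + tK3 (compl' W) = 1 - 3 * e + 3 * P := by
    rw [tK3_prod hW, tK3_prod hV]
    have hki : Integrable (fun p : 𝕀 × 𝕀 => W p.1 p.2 * kg W p.1 p.2) :=
      intg (hW.1.mul (kg_meas hW)) (fun p => mul_abs_le_one (habs hW _ _) (kg_abs hW _ _))
    have hki' : Integrable (fun p : 𝕀 × 𝕀 => compl' W p.1 p.2 * kg (compl' W) p.1 p.2) :=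
      intg (hV.1.mul (kg_meas hV)) (fun p => mul_abs_le_one (habs hV _ _) (kg_abs hV _ _))
    rw [← integral_add hki hki']
    have hpt : ∀ p : 𝕀 × 𝕀, W p.1 p.2 * kg W p.1 p.2 + compl' W p.1 p.2 * kg (compl' W) p.1 p.2
        = 1 - dg W p.1 - dg W p.2 - W p.1 p.2 + kg W p.1 p.2
            + W p.1 p.2 * dg W p.1 + W p.1 p.2 * dg W p.2 := by
      intro p
      rw [show compl' W p.1 p.2 = 1 - W p.1 p.2 from rfl, kg_compl hW p.1 p.2]
      ring
    rw [integral_congr_ae (ae_of_all _ hpt)]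
    have i1 : Integrable (fun p : 𝕀 × 𝕀 => dg W p.1) :=
      intg ((dg_meas hW).comp measurable_fst) (fun p => dg_abs hW _)
    have i2 : Integrable (fun p : 𝕀 × 𝕀 => dg W p.2) :=
      intg ((dg_meas hW).comp measurable_snd) (fun p => dg_abs hW _)
    have i3 : Integrable (fun p : 𝕀 × 𝕀 => W p.1 p.2) := intg hW.1 (fun p => habs hW _ _)
    have i4 : Integrable (fun p : 𝕀 × 𝕀 => kg W p.1 p.2) :=
      intg (kg_meas hW) (fun p => kg_abs hW _ _)
    have i5 : Integrable (fun p : 𝕀 × 𝕀 => W p.1 p.2 * dg W p.1) :=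
      intg (hW.1.mul ((dg_meas hW).comp measurable_fst))
        (fun p => mul_abs_le_one (habs hW _ _) (dg_abs hW _))
    have i6 : Integrable (fun p : 𝕀 × 𝕀 => W p.1 p.2 * dg W p.2) :=
      intg (hW.1.mul ((dg_meas hW).comp measurable_snd))
        (fun p => mul_abs_le_one (habs hW _ _) (dg_abs hW _))
    have j1 : Integrable (fun p : 𝕀 × 𝕀 => 1 - dg W p.1) := by
      exact (integrable_const 1).sub i1
    have j2 : Integrable (fun p : 𝕀 × 𝕀 => 1 - dg W p.1 - dg W p.2) := by exact j1.sub i2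
    have j3 : Integrable (fun p : 𝕀 × 𝕀 => 1 - dg W p.1 - dg W p.2 - W p.1 p.2) := by
      exact j2.sub i3
    have j4 : Integrable (fun p : 𝕀 × 𝕀 =>
        1 - dg W p.1 - dg W p.2 - W p.1 p.2 + kg W p.1 p.2) := by exact j3.add i4
    have j5 : Integrable (fun p : 𝕀 × 𝕀 =>
        1 - dg W p.1 - dg W p.2 - W p.1 p.2 + kg W p.1 p.2 + W p.1 p.2 * dg W p.1) := by
      exact j4.add i5
    rw [integral_add j5 i6, integral_add j4 i5, integral_add j3 i4, integral_sub j2 i3,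
      integral_sub j1 i2, integral_sub (integrable_const 1) i1,
      int_dg_fst hW, int_dg_snd hW, int_U hW, int_kg hW, int_U_dg_fst hW, int_U_dg_snd hW]
    simp only [integral_const, measure_univ, ENNReal.toReal_one, probReal_univ, smul_eq_mul, one_mul, mul_one,
      one_smul]
    ring
  -- Cauchy–Schwarz facts
  have csW : (tK3 W) ^ 2 ≤ tK2 W * tD W := by
    have h := cs (F := fun p : 𝕀 × 𝕀 => W p.1 p.2) (G := fun p : 𝕀 × 𝕀 => kg W p.1 p.2)
      hW.1 (kg_meas hW) (fun p => hW.2.2.1 _ _) (fun p => habs hW _ _) (fun p => kg_abs hW _ _)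
    rw [tK3_prod hW, tK2_prod W hW, tD_prod hW]
    exact h
  have csV : (tK3 (compl' W)) ^ 2 ≤ tK2 (compl' W) * tD (compl' W) := by
    have h := cs (F := fun p : 𝕀 × 𝕀 => compl' W p.1 p.2)
      (G := fun p : 𝕀 × 𝕀 => kg (compl' W) p.1 p.2)
      hV.1 (kg_meas hV) (fun p => hV.2.2.1 _ _) (fun p => habs hV _ _) (fun p => kg_abs hV _ _)
    rw [tK3_prod hV, tK2_prod _ hV, tD_prod hV]
    exact h
  have hK2 : tK2 W = e := tK2_eq hW
  rw [hK2] at csW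
  rw [f5] at csV
  have he0 : 0 ≤ e := integral_nonneg (dg_nonneg hW)
  have he1 : e ≤ 1 := (abs_le.1 (abs_int_le (dg_abs hW))).2
  have ha : 0 ≤ tK3 W := tK3_nonneg hW
  have hb : 0 ≤ tK3 (compl' W) := tK3_nonneg hV
  have hD1 : 0 ≤ tD W := tD_nonneg hW
  have hD2 : 0 ≤ tD (compl' W) := tD_nonneg hV
  set a := tK3 W
  set b := tK3 (compl' W)
  set D1 := tD W
  set D2 := tD (compl' W)
  have key : (a + b) ^ 2 ≤ D1 + D2 := by
    rcases eq_or_lt_of_le he0 with h0 | h0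
    · have heD : e * D1 = 0 := by rw [← h0]; ring
      have ha' : a ≤ 0 := by nlinarith [csW, heD]
      have ha0 : a = 0 := le_antisymm ha' ha
      have heD2 : (1 - e) * D2 = D2 := by rw [← h0]; ring
      have hb2 : b ^ 2 ≤ D2 := by nlinarith [csV, heD2]
      rw [ha0, zero_add]
      linarith [hb2, hD1]
    rcases eq_or_lt_of_le he1 with h1 | h1
    · have heD : (1 - e) * D2 = 0 := by rw [h1]; ring
      have hb' : b ≤ 0 := by nlinarith [csV, heD]
      have hb0 : b = 0 := le_antisymm hb' hb
      have heD1 : e * D1 = D1 := by rw [h1]; ring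
      have ha2 : a ^ 2 ≤ D1 := by nlinarith [csW, heD1]
      rw [hb0, add_zero]
      linarith [ha2, hD2]
    · nlinarith [csW, csV, sq_nonneg ((1 - e) * a - e * b),
        mul_pos h0 (by linarith : (0:ℝ) < 1 - e),
        mul_nonneg (le_of_lt h0) hD1, mul_nonneg (by linarith : (0:ℝ) ≤ 1 - e) hD2]
  have hsqrt : a + b ≤ Real.sqrt (D1 + D2) := by
    rw [Real.le_sqrt (add_nonneg ha hb) (by linarith)]
    exact key
  constructor
  · rw [f1, f2, f3]; ring
  · rw [f1, f2]
    have h23 : 2 / 3 * (a + b) ≤ 2 / 3 * Real.sqrt (D1 + D2) := by linarith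
    have heq : P + (1 - 2 * e + P) = 2 / 3 * (a + b) + 1 / 3 := by rw [f3]; ring
    linarith

end GoodmanAux

theorem goodman_diamond (W : unitInterval → unitInterval → ℝ) (hW : IsGraphon W) :
    tP3 W + tP3 (compl' W) = 2 / 3 * (tK3 W + tK3 (compl' W)) + 1 / 3 ∧
      tP3 W + tP3 (compl' W) ≤ 2 / 3 * Real.sqrt (tD W + tD (compl' W)) + 1 / 3 :=
  GoodmanAux.goodman_main W hW
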